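/- For every m > β + 4, sup_{x ∈ ℝ^d} (1+|x|^m)^{−1} |u(x) − ∫_0^N (∫ f(y) μ_t^x(dy)) dt| → 0 as N → ∞; that is, the truncated integrals converge to u uniformly in the weighted supremum norm with weight (1+|x|^m)^{−1}. -/

import Mathlib

open MeasureTheory Set

/-- Total variation norm of the difference of two (finite) measures. -/
noncomputable def tvNorm {α : Type*} [MeasurableSpace α] (μ ν : Measure α) : ℝ :=
  (⨆ (E : Set α) (_ : MeasurableSet E), (μ E - ν E)).toReal +
  (⨆ (E : Set α) (_ : MeasurableSet E), (ν E - μ E)).toReal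

open ENNReal Filter Topology

set_option maxHeartbeats 1000000

section auxlemmas

variable {α : Type*} [MeasurableSpace α]

/-- One-sided layer-cake TV bound for nonnegative bounded functions. -/
lemma onesided_tv (ν μ : Measure α) [IsProbabilityMeasure ν] [IsProbabilityMeasure μ]
    {g : α → ℝ} (hg : Measurable g) {M : ℝ} (hM : 0 ≤ M)
    (hg0 : ∀ y, 0 ≤ g y) (hgM : ∀ y, g y ≤ M) :
    ∫ y, g y ∂ν - ∫ y, g y ∂μ ≤
      M * (⨆ (E : Set α) (_ : MeasurableSet E), (ν E - μ E)).toReal := by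
  set S : ℝ≥0∞ := ⨆ (E : Set α) (_ : MeasurableSet E), (ν E - μ E) with hS
  have hS1 : S ≤ 1 := by
    refine iSup₂_le fun E _ => ?_
    exact le_trans (tsub_le_self) prob_le_one
  have hSfin : S ≠ ⊤ := (lt_of_le_of_lt hS1 (by norm_num)).ne
  have hgint : ∀ (κ : Measure α), IsProbabilityMeasure κ → Integrable g κ := by
    intro κ hκ
    refine ⟨hg.aestronglyMeasurable, ?_⟩
    exact HasFiniteIntegral.of_bounded (C := M)
      (Filter.Eventually.of_forall fun y => by
        rw [Real.norm_eq_abs, abs_of_nonneg (hg0 y)]; exact hgM y)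
  -- layer cake
  have lcν := (hgint ν inferInstance).integral_eq_integral_meas_lt
    (Filter.Eventually.of_forall hg0)
  have lcμ := (hgint μ inferInstance).integral_eq_integral_meas_lt
    (Filter.Eventually.of_forall hg0)
  -- the two layer functions
  set Fν : ℝ → ℝ := fun t => (ν {a | t < g a}).toReal with hFν
  set Fμ : ℝ → ℝ := fun t => (μ {a | t < g a}).toReal with hFμ
  have hmeasF : ∀ (κ : Measure α), Measurable (fun t => (κ {a | t < g a}).toReal) := by
    intro κ
    exact Measurable.ennreal_toReal (Antitone.measurable
      (fun s t hst => measure_mono (fun a ha => lt_of_le_of_lt hst ha)))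
  have hbd : ∀ (κ : Measure α), IsProbabilityMeasure κ → ∀ t ∈ Ioi (0:ℝ),
      ‖(κ {a | t < g a}).toReal‖ ≤ (Ioc (0:ℝ) M).indicator (fun _ => (1:ℝ)) t := by
    intro κ hκ t ht
    rw [Real.norm_eq_abs, abs_of_nonneg ENNReal.toReal_nonneg]
    by_cases hM' : t ≤ M
    · rw [indicator_of_mem (mem_Ioc.2 ⟨ht, hM'⟩)]
      exact ENNReal.toReal_le_of_le_ofReal zero_le_one (by simpa using prob_le_one)
    · have : {a | t < g a} = ∅ := by
        ext a; simp only [mem_setOf_eq, mem_empty_iff_false, iff_false, not_lt]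
        exact le_trans (hgM a) (le_of_not_ge hM')
      rw [this]
      simp only [measure_empty, ENNReal.toReal_zero]
      exact Set.indicator_nonneg (fun _ _ => zero_le_one) t
  have hindint : Integrable ((Ioc (0:ℝ) M).indicator (fun _ => (1:ℝ)))
      (volume.restrict (Ioi (0:ℝ))) := by
    refine (integrable_indicator_iff measurableSet_Ioc).2 ?_
    exact integrableOn_const (ne_of_lt (lt_of_le_of_lt (Measure.restrict_apply_le _ _)
      (by rw [Real.volume_Ioc]; exact ENNReal.ofReal_lt_top)))
  have hintF : ∀ (κ : Measure α), IsProbabilityMeasure κ →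
      IntegrableOn (fun t => (κ {a | t < g a}).toReal) (Ioi (0:ℝ)) volume := by
    intro κ hκ
    exact Integrable.mono' hindint (hmeasF κ).aestronglyMeasurable
      ((ae_restrict_iff' measurableSet_Ioi).2 (Filter.Eventually.of_forall (hbd κ hκ)))
  have hptw : ∀ t ∈ Ioi (0:ℝ), Fν t - Fμ t ≤
      (Ioc (0:ℝ) M).indicator (fun _ => S.toReal) t := by
    intro t ht
    by_cases hM' : t ≤ M
    · rw [indicator_of_mem (mem_Ioc.2 ⟨ht, hM'⟩)]
      have hEm : MeasurableSet {a | t < g a} := measurableSet_lt measurable_const hg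
      have h1 : ν {a | t < g a} ≤ S + μ {a | t < g a} := by
        have h2 : ν {a | t < g a} - μ {a | t < g a} ≤ S := by
          rw [hS]
          exact le_iSup₂ (f := fun (E : Set α) (_ : MeasurableSet E) => ν E - μ E) _ hEm
        exact tsub_le_iff_right.1 h2
      have h3 : (ν {a | t < g a}).toReal ≤ (S + μ {a | t < g a}).toReal :=
        ENNReal.toReal_mono (by finiteness) h1
      rw [ENNReal.toReal_add hSfin (measure_ne_top μ _)] at h3
      simp only [hFν, hFμ]
      linarith
    · have hempty : {a | t < g a} = ∅ := by
        ext a; simp only [mem_setOf_eq, mem_empty_iff_false, iff_false, not_lt]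
        exact le_trans (hgM a) (le_of_not_ge hM')
      rw [indicator_of_notMem (fun h => hM' (mem_Ioc.1 h).2)]
      simp only [hFν, hFμ, hempty, measure_empty, ENNReal.toReal_zero]
      simp
  have hindint2 : Integrable ((Ioc (0:ℝ) M).indicator (fun _ => S.toReal))
      (volume.restrict (Ioi (0:ℝ))) := by
    refine (integrable_indicator_iff measurableSet_Ioc).2 ?_
    exact integrableOn_const (ne_of_lt (lt_of_le_of_lt (Measure.restrict_apply_le _ _)
      (by rw [Real.volume_Ioc]; exact ENNReal.ofReal_lt_top)))
  have hsub : Integrable (fun t => Fν t - Fμ t) (volume.restrict (Ioi (0:ℝ))) :=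
    (hintF ν inferInstance).sub (hintF μ inferInstance)
  calc ∫ y, g y ∂ν - ∫ y, g y ∂μ
      = ∫ t in Ioi (0:ℝ), (Fν t - Fμ t) := by
        rw [lcν, lcμ, integral_sub (hintF ν inferInstance) (hintF μ inferInstance)]; rfl
    _ ≤ ∫ t in Ioi (0:ℝ), (Ioc (0:ℝ) M).indicator (fun _ => S.toReal) t :=
        setIntegral_mono_on hsub hindint2 measurableSet_Ioi hptw
    _ = S.toReal * M := by
        rw [integral_indicator measurableSet_Ioc, Measure.restrict_restrict measurableSet_Ioc,
          inter_eq_self_of_subset_left Ioc_subset_Ioi_self, setIntegral_const,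
          measureReal_def, Real.volume_Ioc, smul_eq_mul]
        rw [ENNReal.toReal_ofReal (by linarith), mul_comm]
        ring_nf
    _ = M * S.toReal := by rw [mul_comm]

lemma tv_integral_bound (ν μ : Measure α) [IsProbabilityMeasure ν] [IsProbabilityMeasure μ]
    {g : α → ℝ} (hg : Measurable g) {M : ℝ} (hM : 0 ≤ M) (hb : ∀ y, |g y| ≤ M) :
    |∫ y, g y ∂ν - ∫ y, g y ∂μ| ≤ 2 * M * tvNorm ν μ := by
  set h : α → ℝ := fun y => g y + M with hh
  have h0 : ∀ y, 0 ≤ h y := fun y => by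
    have := abs_le.1 (hb y); simp only [hh]; linarith [this.1]
  have h2M : ∀ y, h y ≤ 2 * M := fun y => by
    have := abs_le.1 (hb y); simp only [hh]; linarith [this.2]
  have hhm : Measurable h := hg.add_const M
  have hgint : ∀ (κ : Measure α), IsProbabilityMeasure κ → Integrable g κ := by
    intro κ hκ
    refine ⟨hg.aestronglyMeasurable, ?_⟩
    exact HasFiniteIntegral.of_bounded (C := M)
      (Filter.Eventually.of_forall fun y => by rw [Real.norm_eq_abs]; exact hb y)
  have hsum : ∀ (κ : Measure α), IsProbabilityMeasure κ →
      ∫ y, h y ∂κ = ∫ y, g y ∂κ + M := by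
    intro κ hκ
    rw [hh]
    rw [integral_add (hgint κ hκ) (integrable_const M), integral_const]
    simp
  have key1 := onesided_tv ν μ hhm (by linarith) h0 h2M
  have key2 := onesided_tv μ ν hhm (by linarith) h0 h2M
  rw [hsum ν inferInstance, hsum μ inferInstance] at key1 key2
  have hnn : ∀ (κ₁ κ₂ : Measure α),
      0 ≤ (⨆ (E : Set α) (_ : MeasurableSet E), (κ₁ E - κ₂ E)).toReal :=
    fun _ _ => ENNReal.toReal_nonneg
  rw [abs_le]
  unfold tvNorm
  constructor
  · nlinarith [hnn ν μ, hnn μ ν]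
  · nlinarith [hnn ν μ, hnn μ ν]

lemma integrable_of_lint (ν : Measure α) {g : α → ℝ} (hg : Measurable g) (h0 : ∀ y, 0 ≤ g y)
    (hb : ∫⁻ y, ENNReal.ofReal (g y) ∂ν < ⊤) : Integrable g ν := by
  refine ⟨hg.aestronglyMeasurable, ?_⟩
  rw [hasFiniteIntegral_iff_ofReal (Filter.Eventually.of_forall h0)]
  exact hb

lemma moment_le (ν : Measure α) {g : α → ℝ} (hg : Measurable g) (h0 : ∀ y, 0 ≤ g y)
    {K : ℝ} (hK : 0 ≤ K) (hb : ∫⁻ y, ENNReal.ofReal (g y) ∂ν ≤ ENNReal.ofReal K) :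
    ∫ y, g y ∂ν ≤ K := by
  rw [integral_eq_lintegral_of_nonneg_ae (Filter.Eventually.of_forall h0)
    hg.aestronglyMeasurable]
  calc (∫⁻ y, ENNReal.ofReal (g y) ∂ν).toReal
      ≤ (ENNReal.ofReal K).toReal := ENNReal.toReal_mono ENNReal.ofReal_ne_top hb
    _ = K := ENNReal.toReal_ofReal hK

end auxlemmas

/-- for every `m > β + 4`,
`sup_x (1+|x|^m)⁻¹ |u(x) − ∫_0^N (∫ f dμ_t^x) dt| → 0` as `N → ∞`, i.e. the truncated
integrals converge to `u` uniformly in the weighted sup norm with weight `(1+|x|^m)⁻¹`. -/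
theorem stmt2
    (d : ℕ) (hd : 1 ≤ d)
    (P : ℝ → EuclideanSpace ℝ (Fin d) → Measure (EuclideanSpace ℝ (Fin d)))
    (μ : Measure (EuclideanSpace ℝ (Fin d)))
    (hP : ∀ t x, 0 ≤ t → IsProbabilityMeasure (P t x))
    (hμ : IsProbabilityMeasure μ)
    (hmeas : ∀ E : Set (EuclideanSpace ℝ (Fin d)), MeasurableSet E →
      Measurable (fun p : ℝ × EuclideanSpace ℝ (Fin d) => P p.1 p.2 E))
    (hP1 : ∀ m m' : ℝ, 0 < m → m + 2 < m' → ∃ C : ℝ, ∀ t x, 0 ≤ t →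
      ∫⁻ y, ENNReal.ofReal (‖y‖ ^ m) ∂(P t x) ≤ ENNReal.ofReal (C * (1 + ‖x‖ ^ m')))
    (hP2 : ∀ m : ℝ, 0 < m → ∫⁻ y, ENNReal.ofReal (‖y‖ ^ m) ∂μ < ⊤)
    (hP3 : ∀ k m : ℝ, 0 < k → 2 * k + 2 < m → ∃ C : ℝ, ∀ t x, 0 ≤ t →
      tvNorm (P t x) μ ≤ C * (1 + ‖x‖ ^ m) * (1 + t) ^ (-(k + 1)))
    (β Cf : ℝ) (hβ : 0 ≤ β) (hCf : 1 ≤ Cf)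
    (f : EuclideanSpace ℝ (Fin d) → ℝ) (hf : Measurable f)
    (hfb : ∀ y, |f y| ≤ Cf * (1 + ‖y‖ ^ β))
    (hfμ : ∫ y, f y ∂μ = 0) :
    ∀ m : ℝ, β + 4 < m →
      ∀ ε : ℝ, 0 < ε → ∃ N₀ : ℝ, ∀ N : ℝ, N₀ ≤ N →
        ∀ x,
          (1 + ‖x‖ ^ m)⁻¹ *
            |(∫ t in Ioi (0 : ℝ), ∫ y, f y ∂(P t x)) -
              ∫ t in Ioc (0 : ℝ) N, ∫ y, f y ∂(P t x)| ≤ ε := by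
  intro m hm ε hε
  haveI : IsProbabilityMeasure μ := hμ
  -- parameters
  set k : ℝ := ((β/2 + 1) + (m-2)/2)/2 with hk
  have hk1 : β/2 + 1 < k := by rw [hk]; linarith
  have hk2 : k < (m-2)/2 := by rw [hk]; linarith
  have hk0 : 0 < k := by linarith
  clear_value k
  set θ : ℝ := 1/2 + 1/(2*(1+β)) with hθ
  have h1β : (0:ℝ) < 1 + β := by linarith
  have hθh : 1/2 < θ := by
    rw [hθ]; have : 0 < 1/(2*(1+β)) := by positivity
    linarith
  have hθβ : θ * β < k := by
    have hfrac : β / (1+β) ≤ 1 := (div_le_one h1β).2 (by linarith)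
    have hth : θ * β = β/2 + (β/(1+β))/2 := by rw [hθ]; field_simp
    rw [hth]
    have hfr0 : 0 ≤ β / (1+β) := by positivity
    linarith
  clear_value θ
  have hθ0 : 0 < θ := by linarith
  set η : ℝ := min (k - θ*β) (2*θ - 1) with hη
  have hη0 : 0 < η := lt_min (by linarith) (by linarith)
  have hη1 : η ≤ k - θ*β := min_le_left _ _
  have hη2 : η ≤ 2*θ - 1 := min_le_right _ _
  clear_value η
  -- constants
  obtain ⟨C₃, hC₃⟩ := hP3 k m hk0 (by linarith)
  set C₃' : ℝ := max C₃ 0 with hC₃'def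
  have hC₃0 : 0 ≤ C₃' := le_max_right _ _
  have hC₃' : ∀ t x, 0 ≤ t →
      tvNorm (P t x) μ ≤ C₃' * (1 + ‖x‖ ^ m) * (1 + t) ^ (-(k + 1)) := by
    intro t x ht
    refine (hC₃ t x ht).trans ?_
    have h1 : (0:ℝ) ≤ 1 + ‖x‖ ^ m := by positivity
    have h2 : (0:ℝ) ≤ (1 + t) ^ (-(k + 1)) := Real.rpow_nonneg (by linarith) _
    have h3 : C₃ ≤ C₃' := le_max_left _ _
    exact mul_le_mul_of_nonneg_right (mul_le_mul_of_nonneg_right h3 h1) h2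
  clear_value C₃'
  obtain ⟨Ca, hCa⟩ := hP1 2 m (by norm_num) (by linarith)
  obtain ⟨Cb, hCb⟩ := hP1 (β+2) m (by linarith) (by linarith)
  set Ca' : ℝ := max Ca 0 with hCa'def
  set Cb' : ℝ := max Cb 0 with hCb'def
  have hCa0 : 0 ≤ Ca' := le_max_right _ _
  have hCb0 : 0 ≤ Cb' := le_max_right _ _
  have hCaup : ∀ t x, 0 ≤ t →
      ∫⁻ y, ENNReal.ofReal (‖y‖ ^ (2:ℝ)) ∂(P t x) ≤ ENNReal.ofReal (Ca * (1 + ‖x‖ ^ m)) :=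
    hCa
  have hCbup := hCb
  -- measurability of moment functions
  have hm2 : Measurable fun y : EuclideanSpace ℝ (Fin d) => ‖y‖ ^ (2:ℝ) := by fun_prop
  have hmb : Measurable fun y : EuclideanSpace ℝ (Fin d) => ‖y‖ ^ (β+2) := by fun_prop
  have h02 : ∀ y : EuclideanSpace ℝ (Fin d), 0 ≤ ‖y‖ ^ (2:ℝ) :=
    fun y => Real.rpow_nonneg (norm_nonneg y) _
  have h0b : ∀ y : EuclideanSpace ℝ (Fin d), 0 ≤ ‖y‖ ^ (β+2) :=
    fun y => Real.rpow_nonneg (norm_nonneg y) _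
  -- real moment bounds for P t x
  have upg : ∀ (ν : Measure (EuclideanSpace ℝ (Fin d))) (q C : ℝ) (x : EuclideanSpace ℝ (Fin d)),
      Measurable (fun y : EuclideanSpace ℝ (Fin d) => ‖y‖ ^ q) →
      (∫⁻ y, ENNReal.ofReal (‖y‖ ^ q) ∂ν ≤ ENNReal.ofReal (C * (1 + ‖x‖ ^ m))) →
      Integrable (fun y => ‖y‖ ^ q) ν ∧
        ∫ y, ‖y‖ ^ q ∂ν ≤ (max C 0) * (1 + ‖x‖ ^ m) := by
    intro ν q C x hmq hb
    have h1 : (0:ℝ) ≤ 1 + ‖x‖ ^ m := by positivity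
    have hb' : ∫⁻ y, ENNReal.ofReal (‖y‖ ^ q) ∂ν ≤ ENNReal.ofReal ((max C 0) * (1 + ‖x‖ ^ m)) :=
      hb.trans (ENNReal.ofReal_le_ofReal (mul_le_mul_of_nonneg_right (le_max_left C 0) h1))
    have h0q : ∀ y : EuclideanSpace ℝ (Fin d), 0 ≤ ‖y‖ ^ q :=
      fun y => Real.rpow_nonneg (norm_nonneg y) _
    exact ⟨integrable_of_lint ν hmq h0q (lt_of_le_of_lt hb' ENNReal.ofReal_lt_top),
      moment_le ν hmq h0q (by positivity) hb'⟩
  -- μ moments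
  have hμ2 : Integrable (fun y => ‖y‖ ^ (2:ℝ)) μ :=
    integrable_of_lint μ hm2 h02 (hP2 2 (by norm_num))
  have hμb : Integrable (fun y => ‖y‖ ^ (β+2)) μ :=
    integrable_of_lint μ hmb h0b (hP2 (β+2) (by linarith))
  set Kμ : ℝ := ∫ y, ‖y‖ ^ (2:ℝ) ∂μ + ∫ y, ‖y‖ ^ (β+2) ∂μ with hKμ
  have hKμ0 : 0 ≤ Kμ := by
    rw [hKμ]
    exact add_nonneg (integral_nonneg h02) (integral_nonneg h0b)
  clear_value Kμ
  -- pointwise domination of f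
  have hfdom : ∀ y : EuclideanSpace ℝ (Fin d), |f y| ≤ 2*Cf*(1 + ‖y‖ ^ (β+2)) := by
    intro y
    have h1 : ‖y‖ ^ β ≤ 1 + ‖y‖ ^ (β+2) := by
      rcases le_or_gt ‖y‖ 1 with h | h
      · have := Real.rpow_le_one (norm_nonneg y) h hβ
        linarith [h0b y]
      · have := Real.rpow_le_rpow_of_exponent_le h.le (by linarith : β ≤ β + 2)
        linarith
    calc |f y| ≤ Cf * (1 + ‖y‖ ^ β) := hfb y
      _ ≤ Cf * (2 + ‖y‖ ^ (β+2)) :=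
          mul_le_mul_of_nonneg_left (by linarith) (by linarith)
      _ ≤ 2*Cf*(1 + ‖y‖ ^ (β+2)) := by
          have h2 : 0 ≤ Cf * ‖y‖ ^ (β+2) := mul_nonneg (by linarith) (h0b y)
          have e : 2*Cf*(1 + ‖y‖ ^ (β+2)) = Cf * (2 + ‖y‖ ^ (β+2)) + Cf * ‖y‖ ^ (β+2) := by
            ring
          linarith
  have hfint : ∀ (κ : Measure (EuclideanSpace ℝ (Fin d))), IsProbabilityMeasure κ →
      Integrable (fun y => ‖y‖ ^ (β+2)) κ → Integrable f κ := by
    intro κ hκi hb2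
    haveI := hκi
    refine Integrable.mono' (((integrable_const (1:ℝ)).add hb2).const_mul (2*Cf))
      hf.aestronglyMeasurable (Filter.Eventually.of_forall fun y => ?_)
    rw [Real.norm_eq_abs]
    simpa using hfdom y
  -- KEY pointwise (in t) estimate
  set D : ℝ := 4*Cf*C₃' + Cf*(Ca'+Cb') + Cf*Kμ with hD
  have hCf0 : (0:ℝ) < Cf := by linarith
  have hD0 : 0 ≤ D := by
    rw [hD]
    have h1 : 0 ≤ 4*Cf*C₃' := mul_nonneg (by linarith) hC₃0
    have h2 : 0 ≤ Cf*(Ca'+Cb') := mul_nonneg (by linarith) (by linarith)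
    have h3 : 0 ≤ Cf*Kμ := mul_nonneg (by linarith) hKμ0
    linarith
  clear_value D
  have key : ∀ t, 0 ≤ t → ∀ x,
      |∫ y, f y ∂(P t x)| ≤ D * (1 + ‖x‖ ^ m) * (1+t) ^ (-(1+η)) := by
    intro t ht x
    haveI := hP t x ht
    set X : ℝ := ‖x‖ ^ m with hX
    have hX0 : 0 ≤ X := Real.rpow_nonneg (norm_nonneg x) _
    clear_value X
    have h1t : (0:ℝ) < 1 + t := by linarith
    have h1t1 : (1:ℝ) ≤ 1 + t := by linarith
    set R : ℝ := (1+t) ^ θ with hR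
    have hR1 : 1 ≤ R := Real.one_le_rpow h1t1 hθ0.le
    have hR0 : 0 < R := by linarith
    have hRβ0 : (0:ℝ) ≤ R ^ β := Real.rpow_nonneg hR0.le _
    have hR2pos : (0:ℝ) < R ^ (2:ℝ) := Real.rpow_pos_of_pos hR0 _
    set s : Set (EuclideanSpace ℝ (Fin d)) := {y | ‖y‖ ≤ R} with hs
    have hsm : MeasurableSet s := measurableSet_le measurable_norm measurable_const
    set g₁ := s.indicator f with hg₁
    set g₂ := sᶜ.indicator f with hg₂
    -- moments for ν
    obtain ⟨hν2int, hν2⟩ := upg (P t x) 2 Ca x hm2 (hCaup t x ht)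
    obtain ⟨hνbint, hνb⟩ := upg (P t x) (β+2) Cb x hmb (hCbup t x ht)
    rw [← hCa'def, ← hX] at hν2
    rw [← hCb'def, ← hX] at hνb
    have hfν : Integrable f (P t x) := hfint _ inferInstance hνbint
    have hfμint : Integrable f μ := hfint _ inferInstance hμb
    have hsplit : ∀ (κ : Measure (EuclideanSpace ℝ (Fin d))), Integrable f κ →
        ∫ y, f y ∂κ = ∫ y, g₁ y ∂κ + ∫ y, g₂ y ∂κ := by
      intro κ hint
      rw [← integral_add (hint.indicator hsm) (hint.indicator hsm.compl)]
      apply integral_congr_ae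
      filter_upwards with y
      show f y = s.indicator f y + sᶜ.indicator f y
      rw [← Pi.add_apply (s.indicator f) (sᶜ.indicator f), Set.indicator_self_add_compl]
    -- bound on g₁
    have hbg₁ : ∀ y, |g₁ y| ≤ Cf * (1 + R ^ β) := by
      intro y
      rw [hg₁]
      by_cases hy : y ∈ s
      · rw [Set.indicator_of_mem hy]
        refine (hfb y).trans ?_
        have h1 : ‖y‖ ^ β ≤ R ^ β := Real.rpow_le_rpow (norm_nonneg y) hy hβ
        exact mul_le_mul_of_nonneg_left (by linarith) (by linarith)
      · rw [Set.indicator_of_notMem hy]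
        simp only [abs_zero]
        exact mul_nonneg hCf0.le (by linarith)
    have hM₁ : (0:ℝ) ≤ Cf * (1 + R ^ β) := mul_nonneg hCf0.le (by linarith)
    have hdiff := tv_integral_bound (P t x) μ (hf.indicator hsm) hM₁ hbg₁
    -- tail bound
    have hpt : ∀ y, |g₂ y| ≤ Cf/(R ^ (2:ℝ)) * (‖y‖ ^ (2:ℝ) + ‖y‖ ^ (β+2)) := by
      intro y
      have hR2 : (0:ℝ) < R ^ (2:ℝ) := hR2pos
      rw [hg₂]
      by_cases hy : y ∈ sᶜ
      · rw [Set.indicator_of_mem hy]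
        have hyR : R < ‖y‖ := by
          simpa [hs, not_le] using hy
        have hy0 : 0 < ‖y‖ := lt_trans hR0 hyR
        have h2 : R ^ (2:ℝ) ≤ ‖y‖ ^ (2:ℝ) := Real.rpow_le_rpow hR0.le hyR.le (by norm_num)
        have hid : (1 + ‖y‖ ^ β) * ‖y‖ ^ (2:ℝ) = ‖y‖ ^ (2:ℝ) + ‖y‖ ^ (β+2) := by
          rw [add_mul, one_mul, ← Real.rpow_add hy0]
        have hprod : (1 + ‖y‖ ^ β) * R ^ (2:ℝ) ≤ ‖y‖ ^ (2:ℝ) + ‖y‖ ^ (β+2) := by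
          rw [← hid]
          have h1 : (0:ℝ) ≤ 1 + ‖y‖ ^ β := by positivity
          exact mul_le_mul_of_nonneg_left h2 h1
        have hstep : 1 + ‖y‖ ^ β ≤ (‖y‖ ^ (2:ℝ) + ‖y‖ ^ (β+2))/(R ^ (2:ℝ)) :=
          (le_div_iff₀ hR2).2 hprod
        refine (hfb y).trans ?_
        rw [div_mul_eq_mul_div, mul_div_assoc]
        exact mul_le_mul_of_nonneg_left hstep hCf0.le
      · rw [Set.indicator_of_notMem hy]
        simp only [abs_zero]
        exact mul_nonneg (div_nonneg hCf0.le hR2pos.le) (add_nonneg (h02 y) (h0b y))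
    have htail : ∀ (κ : Measure (EuclideanSpace ℝ (Fin d))), Integrable f κ →
        Integrable (fun y => ‖y‖ ^ (2:ℝ)) κ → Integrable (fun y => ‖y‖ ^ (β+2)) κ →
        |∫ y, g₂ y ∂κ| ≤ Cf/(R ^ (2:ℝ)) * (∫ y, ‖y‖ ^ (2:ℝ) ∂κ + ∫ y, ‖y‖ ^ (β+2) ∂κ) := by
      intro κ hintf h2 hb2
      have hg₂int : Integrable g₂ κ := hintf.indicator hsm.compl
      calc |∫ y, g₂ y ∂κ| ≤ ∫ y, |g₂ y| ∂κ := by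
            simpa [Real.norm_eq_abs] using norm_integral_le_integral_norm (μ := κ) g₂
        _ ≤ ∫ y, Cf/(R ^ (2:ℝ)) * (‖y‖ ^ (2:ℝ) + ‖y‖ ^ (β+2)) ∂κ :=
            integral_mono hg₂int.abs ((h2.add hb2).const_mul _) hpt
        _ = Cf/(R ^ (2:ℝ)) * (∫ y, ‖y‖ ^ (2:ℝ) ∂κ + ∫ y, ‖y‖ ^ (β+2) ∂κ) := by
            rw [integral_const_mul, integral_add h2 hb2]
    have hνtail := htail (P t x) hfν hν2int hνbint
    have hμtail := htail μ hfμint hμ2 hμb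
    have hμtail' : |∫ y, g₂ y ∂μ| ≤ Cf/(R ^ (2:ℝ)) * Kμ := by rw [hKμ]; exact hμtail
    have hνtail' : |∫ y, g₂ y ∂(P t x)| ≤ Cf/(R ^ (2:ℝ)) * ((Ca' + Cb') * (1 + X)) := by
      refine hνtail.trans ?_
      have hRp : (0:ℝ) ≤ Cf/(R ^ (2:ℝ)) := div_nonneg hCf0.le hR2pos.le
      refine mul_le_mul_of_nonneg_left ?_ hRp
      calc ∫ y, ‖y‖ ^ (2:ℝ) ∂(P t x) + ∫ y, ‖y‖ ^ (β+2) ∂(P t x)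
          ≤ Ca' * (1 + X) + Cb' * (1 + X) := add_le_add hν2 hνb
        _ = (Ca' + Cb') * (1 + X) := by ring
    -- assemble
    have hsplitν := hsplit (P t x) hfν
    have hsplitμ := hsplit μ hfμint
    rw [hfμ] at hsplitμ
    have habs : |∫ y, f y ∂(P t x)| ≤
        2 * (Cf * (1 + R ^ β)) * tvNorm (P t x) μ
        + Cf/(R ^ (2:ℝ)) * ((Ca' + Cb') * (1 + X)) + Cf/(R ^ (2:ℝ)) * Kμ := by
      have e1 : ∫ y, f y ∂(P t x) =
          (∫ y, g₁ y ∂(P t x) - ∫ y, g₁ y ∂μ) + ∫ y, g₂ y ∂(P t x) - ∫ y, g₂ y ∂μ := by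
        rw [hsplitν]; linarith
      rw [e1]
      have := abs_sub (|(∫ y, g₁ y ∂(P t x) - ∫ y, g₁ y ∂μ) + ∫ y, g₂ y ∂(P t x)|) 0
      calc |(∫ y, g₁ y ∂(P t x) - ∫ y, g₁ y ∂μ) + ∫ y, g₂ y ∂(P t x) - ∫ y, g₂ y ∂μ|
          ≤ |∫ y, g₁ y ∂(P t x) - ∫ y, g₁ y ∂μ| + |∫ y, g₂ y ∂(P t x)| + |∫ y, g₂ y ∂μ| := by
            have h1 := abs_add_le ((∫ y, g₁ y ∂(P t x) - ∫ y, g₁ y ∂μ) + ∫ y, g₂ y ∂(P t x))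
              (-(∫ y, g₂ y ∂μ))
            have h2 := abs_add_le (∫ y, g₁ y ∂(P t x) - ∫ y, g₁ y ∂μ) (∫ y, g₂ y ∂(P t x))
            rw [abs_neg] at h1
            calc |(∫ y, g₁ y ∂(P t x) - ∫ y, g₁ y ∂μ) + ∫ y, g₂ y ∂(P t x) - ∫ y, g₂ y ∂μ|
                = |((∫ y, g₁ y ∂(P t x) - ∫ y, g₁ y ∂μ) + ∫ y, g₂ y ∂(P t x)) +
                    (-(∫ y, g₂ y ∂μ))| := by ring_nf
              _ ≤ _ := by linarith
        _ ≤ _ := add_le_add (add_le_add hdiff hνtail') hμtail'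
    -- rpow algebra
    have htv := hC₃' t x ht
    rw [← hX] at htv
    have htv0 : 0 ≤ tvNorm (P t x) μ := by
      unfold tvNorm
      exact add_nonneg ENNReal.toReal_nonneg ENNReal.toReal_nonneg
    have hRβ : R ^ β = (1+t) ^ (θ*β) := by
      rw [hR, ← Real.rpow_mul h1t.le]
    have hRβ1 : 1 ≤ (1+t) ^ (θ*β) := Real.one_le_rpow h1t1 (mul_nonneg hθ0.le hβ)
    have hexp1 : (1+t) ^ (θ*β) * (1+t) ^ (-(k+1)) ≤ (1+t) ^ (-(1+η)) := by
      rw [← Real.rpow_add h1t]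
      exact Real.rpow_le_rpow_of_exponent_le h1t1 (by linarith)
    have hR2eq : Cf/(R ^ (2:ℝ)) = Cf * (1+t) ^ (-(2*θ)) := by
      have e : (1+t) ^ (-(2*θ)) = ((1+t) ^ (θ*2:ℝ))⁻¹ := by
        rw [show -(2*θ) = -(θ*2) by ring, Real.rpow_neg h1t.le]
      rw [hR, ← Real.rpow_mul h1t.le, e, div_eq_mul_inv]
    have hexp2 : (1+t) ^ (-(2*θ)) ≤ (1+t) ^ (-(1+η)) :=
      Real.rpow_le_rpow_of_exponent_le h1t1 (by linarith)
    have hrpos : (0:ℝ) ≤ (1+t) ^ (-(1+η)) := Real.rpow_nonneg h1t.le _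
    have hT1 : 2 * (Cf * (1 + R ^ β)) * tvNorm (P t x) μ ≤
        4*Cf*C₃' * ((1 + X) * (1+t) ^ (-(1+η))) := by
      have e1 : 2 * (Cf * (1 + R ^ β)) ≤ 4*Cf*((1+t) ^ (θ*β)) := by
        rw [hRβ]
        have h := mul_le_mul_of_nonneg_left hRβ1 (by linarith : (0:ℝ) ≤ 2*Cf)
        linarith [h]
      calc 2 * (Cf * (1 + R ^ β)) * tvNorm (P t x) μ
          ≤ (4*Cf*((1+t) ^ (θ*β))) * (C₃' * (1 + X) * (1+t) ^ (-(k+1))) := by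
            exact mul_le_mul e1 htv htv0
              (mul_nonneg (mul_nonneg (by norm_num) hCf0.le)
                (Real.rpow_nonneg h1t.le _))
        _ = 4*Cf*C₃' * (1 + X) * ((1+t) ^ (θ*β) * (1+t) ^ (-(k+1))) := by ring
        _ ≤ 4*Cf*C₃' * (1 + X) * (1+t) ^ (-(1+η)) := by
            refine mul_le_mul_of_nonneg_left hexp1 ?_
            exact mul_nonneg (mul_nonneg (mul_nonneg (by norm_num) hCf0.le) hC₃0)
              (by linarith)
        _ = 4*Cf*C₃' * ((1 + X) * (1+t) ^ (-(1+η))) := by ring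
    have hT2 : Cf/(R ^ (2:ℝ)) * ((Ca' + Cb') * (1 + X)) ≤
        Cf*(Ca'+Cb') * ((1 + X) * (1+t) ^ (-(1+η))) := by
      rw [hR2eq]
      calc Cf * (1+t) ^ (-(2*θ)) * ((Ca' + Cb') * (1 + X))
          ≤ Cf * (1+t) ^ (-(1+η)) * ((Ca' + Cb') * (1 + X)) := by
            refine mul_le_mul_of_nonneg_right (mul_le_mul_of_nonneg_left hexp2 hCf0.le) ?_
            exact mul_nonneg (by linarith) (by linarith)
        _ = Cf*(Ca'+Cb') * ((1 + X) * (1+t) ^ (-(1+η))) := by ring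
    have hT3 : Cf/(R ^ (2:ℝ)) * Kμ ≤ Cf*Kμ * ((1 + X) * (1+t) ^ (-(1+η))) := by
      rw [hR2eq]
      have h1 : Cf * (1+t) ^ (-(2*θ)) * Kμ ≤ Cf * (1+t) ^ (-(1+η)) * Kμ :=
        mul_le_mul_of_nonneg_right (mul_le_mul_of_nonneg_left hexp2 hCf0.le) hKμ0
      have h2 : Cf * (1+t) ^ (-(1+η)) * Kμ ≤ Cf*Kμ * ((1 + X) * (1+t) ^ (-(1+η))) := by
        have h3 : 0 ≤ Cf * Kμ * ((1+t) ^ (-(1+η))) * X :=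
          mul_nonneg (mul_nonneg (mul_nonneg hCf0.le hKμ0) hrpos) hX0
        linarith [h3]
      linarith
    rw [hD]
    calc |∫ y, f y ∂(P t x)| ≤ _ := habs
      _ ≤ 4*Cf*C₃' * ((1 + X) * (1+t) ^ (-(1+η)))
          + Cf*(Ca'+Cb') * ((1 + X) * (1+t) ^ (-(1+η)))
          + Cf*Kμ * ((1 + X) * (1+t) ^ (-(1+η))) := add_le_add (add_le_add hT1 hT2) hT3
      _ = (4*Cf*C₃' + Cf*(Ca'+Cb') + Cf*Kμ) * (1 + X) * (1+t) ^ (-(1+η)) := by ring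
  -- integrability of the bound in t
  have hmbleh : Measurable fun t : ℝ => (1+t) ^ (-(1+η)) := by fun_prop
  have hbase : IntegrableOn (fun t : ℝ => (1+t) ^ (-(1+η))) (Ioi (0:ℝ)) volume := by
    have h1 : IntegrableOn (fun t : ℝ => (1+t) ^ (-(1+η))) (Ioc (0:ℝ) 1) volume := by
      refine Integrable.mono' (g := fun _ => (1:ℝ)) ?_ hmbleh.aestronglyMeasurable ?_
      · exact integrableOn_const
          (ne_of_lt (by rw [Real.volume_Ioc]; exact ENNReal.ofReal_lt_top))
      · refine (ae_restrict_iff' measurableSet_Ioc).2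
          (Filter.Eventually.of_forall fun t ht => ?_)
        rw [Real.norm_eq_abs, abs_of_nonneg (Real.rpow_nonneg (by linarith [ht.1]) _)]
        exact Real.rpow_le_one_of_one_le_of_nonpos (by linarith [ht.1]) (by linarith)
    have h2 : IntegrableOn (fun t : ℝ => (1+t) ^ (-(1+η))) (Ioi (1:ℝ)) volume := by
      refine Integrable.mono'
        (integrableOn_Ioi_rpow_of_lt (by linarith : -(1+η) < -1) zero_lt_one)
        hmbleh.aestronglyMeasurable ?_
      refine (ae_restrict_iff' measurableSet_Ioi).2
        (Filter.Eventually.of_forall fun t ht => ?_)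
      have ht1 : (1:ℝ) < t := ht
      rw [Real.norm_eq_abs, abs_of_nonneg (Real.rpow_nonneg (by linarith) _)]
      exact Real.rpow_le_rpow_of_nonpos (by linarith) (by linarith) (by linarith)
    have h3 := h1.union h2
    rwa [Ioc_union_Ioi_eq_Ioi zero_le_one] at h3
  -- a.e.-strong measurability of t ↦ ∫ f ∂(P t x)
  have hmg : ∀ x, AEStronglyMeasurable (fun t => ∫ y, f y ∂(P t x))
      (volume.restrict (Ioi (0:ℝ))) := by
    intro x
    have hκm : Measurable (fun t : ℝ => P (max t 0) x) := by
      apply Measure.measurable_of_measurable_coe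
      intro E hE
      exact (hmeas E hE).comp ((measurable_id.max measurable_const).prodMk measurable_const)
    let κ : ProbabilityTheory.Kernel ℝ (EuclideanSpace ℝ (Fin d)) := ⟨fun t => P (max t 0) x, hκm⟩
    haveI : ProbabilityTheory.IsMarkovKernel κ := ⟨fun t => hP _ x (le_max_right _ _)⟩
    have hsm' : StronglyMeasurable fun p : ℝ × EuclideanSpace ℝ (Fin d) => f p.2 :=
      (hf.comp measurable_snd).stronglyMeasurable
    have hsm : StronglyMeasurable (fun t => ∫ y, f y ∂(κ t)) :=
      hsm'.integral_kernel_prod_right'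
    refine hsm.aestronglyMeasurable.congr ?_
    filter_upwards [ae_restrict_mem measurableSet_Ioi] with t ht
    show ∫ y, f y ∂(κ t) = ∫ y, f y ∂(P t x)
    have hκt : κ t = P t x := by
      show P (max t 0) x = P t x
      rw [max_eq_left (le_of_lt ht)]
    rw [hκt]
  have hIg : ∀ x, IntegrableOn (fun t => ∫ y, f y ∂(P t x)) (Ioi (0:ℝ)) volume := by
    intro x
    refine Integrable.mono' (hbase.const_mul (D * (1 + ‖x‖ ^ m))) (hmg x) ?_
    refine (ae_restrict_iff' measurableSet_Ioi).2 (Filter.Eventually.of_forall fun t ht => ?_)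
    rw [Real.norm_eq_abs]
    exact key t (le_of_lt ht) x
  -- the tail integral tends to 0
  set h : ℝ → ℝ := fun t => (1+t) ^ (-(1+η)) with hhdef
  have hint_ind : Integrable ((Ioi (0:ℝ)).indicator h) volume :=
    (integrable_indicator_iff measurableSet_Ioi).2 hbase
  have hJtendsto : Filter.Tendsto (fun N => ∫ t, (Ioi N).indicator h t)
      Filter.atTop (𝓝 0) := by
    have hlim := tendsto_integral_filter_of_dominated_convergence (μ := volume) (l := Filter.atTop)
      (F := fun N (t : ℝ) => (Ioi N).indicator h t) (f := fun _ => (0:ℝ))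
      (bound := (Ioi (0:ℝ)).indicator h)
      (Filter.Eventually.of_forall fun N =>
        ((hmbleh.indicator measurableSet_Ioi).aestronglyMeasurable))
      ?_ hint_ind ?_
    · simpa using hlim
    · refine (Filter.eventually_ge_atTop (0:ℝ)).mono fun N hN => ?_
      refine Filter.Eventually.of_forall fun t => ?_
      show ‖(Ioi N).indicator h t‖ ≤ (Ioi 0).indicator h t
      by_cases hmem : t ∈ Ioi N
      · have ht0 : t ∈ Ioi (0:ℝ) := lt_of_le_of_lt hN hmem
        rw [Set.indicator_of_mem hmem, Set.indicator_of_mem ht0, Real.norm_eq_abs,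
          abs_of_nonneg (Real.rpow_nonneg (by linarith [mem_Ioi.1 ht0]) _)]
      · rw [Set.indicator_of_notMem hmem]
        simp only [norm_zero]
        exact Set.indicator_nonneg
          (fun u hu => Real.rpow_nonneg (by linarith [mem_Ioi.1 hu]) _) t
    · refine Filter.Eventually.of_forall fun t => ?_
      refine tendsto_const_nhds.congr' ?_
      refine (Filter.eventually_ge_atTop t).mono fun N hN => ?_
      exact (Set.indicator_of_notMem (by simpa using hN) h).symm
  have hD1 : (0:ℝ) < D + 1 := by linarith
  have hJev : ∀ᶠ N in Filter.atTop, ∫ t, (Ioi N).indicator h t < ε/(D+1) :=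
    hJtendsto.eventually_lt_const (div_pos hε hD1)
  obtain ⟨N₁, hN₁⟩ := Filter.eventually_atTop.1 hJev
  refine ⟨max N₁ 0, fun N hN x => ?_⟩
  have hN0 : (0:ℝ) ≤ N := le_trans (le_max_right _ _) hN
  have hNN₁ : N₁ ≤ N := le_trans (le_max_left _ _) hN
  have hX0 : (0:ℝ) ≤ ‖x‖ ^ m := Real.rpow_nonneg (norm_nonneg x) _
  have hXpos : (0:ℝ) < 1 + ‖x‖ ^ m := by linarith
  have hsub1 : Ioc (0:ℝ) N ⊆ Ioi 0 := Ioc_subset_Ioi_self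
  have hsub2 : Ioi N ⊆ Ioi (0:ℝ) := Ioi_subset_Ioi hN0
  have hdecomp : (∫ t in Ioi (0:ℝ), ∫ y, f y ∂(P t x)) =
      (∫ t in Ioc (0:ℝ) N, ∫ y, f y ∂(P t x)) + ∫ t in Ioi N, ∫ y, f y ∂(P t x) := by
    rw [← setIntegral_union (Ioc_disjoint_Ioi le_rfl) measurableSet_Ioi
      ((hIg x).mono_set hsub1) ((hIg x).mono_set hsub2), Ioc_union_Ioi_eq_Ioi hN0]
  have habs2 : |∫ t in Ioi N, ∫ y, f y ∂(P t x)| ≤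
      (D * (1 + ‖x‖ ^ m)) * ∫ t in Ioi N, h t := by
    calc |∫ t in Ioi N, ∫ y, f y ∂(P t x)|
        ≤ ∫ t in Ioi N, |∫ y, f y ∂(P t x)| := by
          simpa [Real.norm_eq_abs] using norm_integral_le_integral_norm
            (μ := volume.restrict (Ioi N)) (fun t => ∫ y, f y ∂(P t x))
      _ ≤ ∫ t in Ioi N, D * (1 + ‖x‖ ^ m) * h t := by
          refine setIntegral_mono_on ((hIg x).mono_set hsub2).abs
            ((hbase.mono_set hsub2).const_mul _) measurableSet_Ioi fun t ht => ?_
          exact key t (le_of_lt (lt_of_le_of_lt hN0 ht)) x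
      _ = (D * (1 + ‖x‖ ^ m)) * ∫ t in Ioi N, h t := integral_const_mul _ _
  have hJle : (∫ t in Ioi N, h t) < ε/(D+1) := by
    have e := integral_indicator (μ := volume) (f := h) (measurableSet_Ioi (a := N))
    rw [← e]
    exact hN₁ N hNN₁
  rw [hdecomp]
  have e2 : (∫ t in Ioc (0:ℝ) N, ∫ y, f y ∂(P t x)) + (∫ t in Ioi N, ∫ y, f y ∂(P t x))
      - (∫ t in Ioc (0:ℝ) N, ∫ y, f y ∂(P t x)) = ∫ t in Ioi N, ∫ y, f y ∂(P t x) := by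
    ring
  rw [e2]
  calc (1 + ‖x‖ ^ m)⁻¹ * |∫ t in Ioi N, ∫ y, f y ∂(P t x)|
      ≤ (1 + ‖x‖ ^ m)⁻¹ * ((D * (1 + ‖x‖ ^ m)) * ∫ t in Ioi N, h t) :=
        mul_le_mul_of_nonneg_left habs2 (inv_nonneg.2 hXpos.le)
    _ = D * ∫ t in Ioi N, h t := by
        rw [show (D * (1 + ‖x‖ ^ m)) * (∫ t in Ioi N, h t)
            = (1 + ‖x‖ ^ m) * (D * ∫ t in Ioi N, h t) by ring,
          ← mul_assoc, inv_mul_cancel₀ (ne_of_gt hXpos), one_mul]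
    _ ≤ D * (ε/(D+1)) := mul_le_mul_of_nonneg_left hJle.le hD0
    _ ≤ ε := by
        rw [mul_div_assoc']
        rw [div_le_iff₀ hD1]
        nlinarith [hε.le]
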